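/- Duality rule for entropy: for all symmetric probability measures x1, x2 ∈ X, H(x1 ⊛ x2) + H(x1 ⊠ x2) = H(x1) + H(x2). -/

import Mathlib

open MeasureTheory Real Filter Topology Polynomial

noncomputable section

/-- The space of finite signed Borel measures on the extended reals `ℝ̄`. -/
abbrev SM := MeasureTheory.SignedMeasure EReal

namespace SCLDPC

/-- The weight `e^{-α/2}` as an extended nonnegative real (`+∞` at `α = -∞`). -/
def wt (α : EReal) : ENNReal :=
  if α = ⊥ then ⊤ else if α = ⊤ then 0 else ENNReal.ofReal (Real.exp (-(α.toReal) / 2))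

/-- A (nonnegative) Borel measure `μ` on `ℝ̄` is symmetric if
`∫_{-E} e^{-α/2} μ(dα) = ∫_{E} e^{-α/2} μ(dα)` for every Borel set `E`
(stated with extended nonnegative integrals, which is equivalent to requiring
equality whenever one of the two sides is finite). -/
def IsSymmMeasure (μ : Measure EReal) : Prop :=
  ∀ E : Set EReal, MeasurableSet E →
    ∫⁻ α in (fun a : EReal => -a) ⁻¹' E, wt α ∂μ = ∫⁻ α in E, wt α ∂μ

/-- Positive part of the Jordan decomposition. -/
def jp (x : SM) : Measure EReal := x.toJordanDecomposition.posPart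

/-- Negative part of the Jordan decomposition. -/
def jn (x : SM) : Measure EReal := x.toJordanDecomposition.negPart

instance (x : SM) : IsFiniteMeasure (jp x) := x.toJordanDecomposition.posPart_finite

instance (x : SM) : IsFiniteMeasure (jn x) := x.toJordanDecomposition.negPart_finite

/-- A finite signed Borel measure on `ℝ̄` is symmetric iff both parts of its Jordan
decomposition are symmetric measures. -/
def IsSymm (x : SM) : Prop := IsSymmMeasure (jp x) ∧ IsSymmMeasure (jn x)

/-- Membership in `X`, the set of symmetric probability measures on `ℝ̄`. -/
def MemX (x : SM) : Prop :=
  (∃ (μ : Measure EReal) (hμ : IsProbabilityMeasure μ),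
      x = (letI := hμ; μ.toSignedMeasure)) ∧ IsSymm x

/-- Membership in `X_d`, the set of differences of symmetric probability measures. -/
def MemXd (y : SM) : Prop := ∃ x1 x2 : SM, MemX x1 ∧ MemX x2 ∧ y = x1 - x2

/-- Integral of a real function against a finite signed measure. -/
def sInt (f : EReal → ℝ) (x : SM) : ℝ := (∫ α, f α ∂(jp x)) - ∫ α, f α ∂(jn x)

/-- `tanh(α/2)` extended continuously to `ℝ̄`. -/
def tanhHalf (α : EReal) : ℝ :=
  if α = ⊤ then 1 else if α = ⊥ then -1 else Real.tanh (α.toReal / 2)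

/-- The inverse hyperbolic tangent on `(-1, 1)`. -/
def artanh (t : ℝ) : ℝ := Real.log ((1 + t) / (1 - t)) / 2

/-- `2 tanh⁻¹(t)` valued in `ℝ̄` (sending `t ≥ 1` to `+∞` and `t ≤ -1` to `-∞`). -/
def atanhTwo (t : ℝ) : EReal :=
  if 1 ≤ t then ⊤ else if t ≤ -1 then ⊥ else ((2 * artanh t : ℝ) : EReal)

/-- Variable-node convolution `⊛` of two (nonnegative) measures:
`(μ ⊛ ν)(E) = ∫ μ(E - α) ν(dα)`, i.e. the pushforward of `μ × ν` under addition. -/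
def mConv (μ ν : Measure EReal) : Measure EReal :=
  (μ.prod ν).map fun p => p.1 + p.2

/-- Check-node convolution `⊠` of two (nonnegative) measures:
`(μ ⊠ ν)(E) = ∫ μ(2 tanh⁻¹(tanh(E/2) / tanh(α/2))) ν(dα)`, where the argument of `μ`
is the image of `E` under `β ↦ 2 tanh⁻¹(tanh(β/2) / tanh(α/2))`; equivalently, the
pushforward of `μ × ν` under `(β, α) ↦ 2 tanh⁻¹(tanh(β/2) · tanh(α/2))`. -/
def mCheck (μ ν : Measure EReal) : Measure EReal :=
  (μ.prod ν).map fun p => atanhTwo (tanhHalf p.1 * tanhHalf p.2)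

instance (μ ν : Measure EReal) [IsFiniteMeasure μ] [IsFiniteMeasure ν] :
    IsFiniteMeasure (mConv μ ν) := by unfold mConv; infer_instance

instance (μ ν : Measure EReal) [IsFiniteMeasure μ] [IsFiniteMeasure ν] :
    IsFiniteMeasure (mCheck μ ν) := by unfold mCheck; infer_instance

/-- The variable-node operation `⊛` extended bilinearly to finite signed measures. -/
def sConv (x y : SM) : SM :=
  (mConv (jp x) (jp y)).toSignedMeasure - (mConv (jp x) (jn y)).toSignedMeasure
    - (mConv (jn x) (jp y)).toSignedMeasure + (mConv (jn x) (jn y)).toSignedMeasure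

/-- The check-node operation `⊠` extended bilinearly to finite signed measures. -/
def sCheck (x y : SM) : SM :=
  (mCheck (jp x) (jp y)).toSignedMeasure - (mCheck (jp x) (jn y)).toSignedMeasure
    - (mCheck (jn x) (jp y)).toSignedMeasure + (mCheck (jn x) (jn y)).toSignedMeasure

/-- The integrand `log₂(1 + e^{-α})` of the entropy functional (with the harmless
convention that it vanishes at `α = ±∞`; symmetric measures put no mass at `-∞`). -/
def entFn (α : EReal) : ℝ :=
  if α = ⊤ then 0 else if α = ⊥ then 0 else Real.logb 2 (1 + Real.exp (-(α.toReal)))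

/-- The entropy functional `H(x) = ∫ log₂(1 + e^{-α}) x(dα)`. -/
def H (x : SM) : ℝ := sInt entFn x

/-! ### Auxiliary lemmas -/

lemma measurable_wt : Measurable wt := by
  unfold wt
  refine Measurable.ite (measurableSet_eq) measurable_const ?_
  refine Measurable.ite (measurableSet_eq) measurable_const ?_
  exact (measurable_ereal_toReal.neg.div_const 2).exp.ennreal_ofReal

lemma measurable_entFn : Measurable entFn := by
  unfold entFn
  refine Measurable.ite (measurableSet_eq) measurable_const ?_
  refine Measurable.ite (measurableSet_eq) measurable_const ?_
  exact (measurable_const.add measurable_ereal_toReal.neg.exp).log.div_const _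

lemma measurable_tanhHalf : Measurable tanhHalf := by
  unfold tanhHalf
  refine Measurable.ite (measurableSet_eq) measurable_const ?_
  refine Measurable.ite (measurableSet_eq) measurable_const ?_
  have htanh : Continuous Real.tanh := by
    have h : Real.tanh = fun x => Real.sinh x / Real.cosh x := funext Real.tanh_eq_sinh_div_cosh
    rw [h]; exact Real.continuous_sinh.div Real.continuous_cosh fun x => (Real.cosh_pos x).ne'
  exact htanh.measurable.comp (measurable_ereal_toReal.div_const 2)

lemma measurable_atanhTwo : Measurable atanhTwo := by
  unfold atanhTwo artanh
  refine Measurable.ite (measurableSet_le measurable_const measurable_id) measurable_const ?_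
  refine Measurable.ite (measurableSet_le measurable_id measurable_const) measurable_const ?_
  exact (measurable_const.mul
    (((measurable_const.add measurable_id).div
      (measurable_const.sub measurable_id)).log.div_const 2)).coe_real_ereal

lemma measurable_addE : Measurable (fun p : EReal × EReal => p.1 + p.2) := by
  have : (fun p : EReal × EReal => p.1 + p.2) = fun p =>
      if p.1 = ⊥ ∨ p.2 = ⊥ then ⊥ else if p.1 = ⊤ ∨ p.2 = ⊤ then ⊤
        else ((p.1.toReal + p.2.toReal : ℝ) : EReal) := by
    funext p
    rcases p with ⟨a, b⟩
    induction a using EReal.rec <;> induction b using EReal.rec <;>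
      simp [EReal.top_add_of_ne_bot, EReal.add_top_of_ne_bot, ← EReal.coe_add]
  rw [this]
  refine Measurable.ite ?_ measurable_const ?_
  · exact (measurable_fst measurableSet_eq).union (measurable_snd measurableSet_eq)
  refine Measurable.ite ?_ measurable_const ?_
  · exact (measurable_fst measurableSet_eq).union (measurable_snd measurableSet_eq)
  exact ((measurable_ereal_toReal.comp measurable_fst).add
    (measurable_ereal_toReal.comp measurable_snd)).coe_real_ereal

lemma measurable_checkFn :
    Measurable (fun p : EReal × EReal => atanhTwo (tanhHalf p.1 * tanhHalf p.2)) :=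
  measurable_atanhTwo.comp
    ((measurable_tanhHalf.comp measurable_fst).mul (measurable_tanhHalf.comp measurable_snd))


/-! ### Pointwise facts -/

lemma entFn_top : entFn ⊤ = 0 := by simp [entFn]

lemma entFn_coe (x : ℝ) : entFn (x : EReal) = Real.logb 2 (1 + Real.exp (-x)) := by
  simp [entFn]

lemma entFn_nonneg (α : EReal) : 0 ≤ entFn α := by
  unfold entFn
  split_ifs with h1 h2
  · exact le_refl 0
  · exact le_refl 0
  · refine Real.logb_nonneg one_lt_two ?_
    have := Real.exp_pos (-(α.toReal)); linarith

lemma tanhHalf_coe (x : ℝ) :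
    tanhHalf (x : EReal) = (1 - Real.exp (-x)) / (1 + Real.exp (-x)) := by
  have hcoe : tanhHalf (x : EReal) = Real.tanh (x / 2) := by
    simp [tanhHalf]
  rw [hcoe]
  have a := Real.exp_pos (x/2)
  have b := Real.exp_pos (-(x/2))
  have hab : Real.exp (x/2) * Real.exp (-(x/2)) = 1 := by
    rw [← Real.exp_add]; simp
  have hx : Real.exp (-x) = Real.exp (-(x/2)) * Real.exp (-(x/2)) := by
    rw [← Real.exp_add]; ring_nf
  have hden : (0:ℝ) < 1 + Real.exp (-x) := by positivity
  have hc : (0:ℝ) < Real.exp (x/2) + Real.exp (-(x/2)) := by positivity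
  rw [Real.tanh_eq_sinh_div_cosh, Real.sinh_eq, Real.cosh_eq, hx]
  have hab2 : Real.exp (x / 2) * Real.exp (-x / 2) = 1 := by
    rw [← Real.exp_add, show x / 2 + -x / 2 = 0 by ring, Real.exp_zero]
  field_simp
  linear_combination (2 * Real.exp (-(x / 2))) * hab

lemma tanhHalf_top : tanhHalf ⊤ = 1 := by simp [tanhHalf]

lemma tanhHalf_bot : tanhHalf ⊥ = -1 := by simp [tanhHalf]

lemma atanhTwo_tanhHalf (β : EReal) : atanhTwo (tanhHalf β) = β := by
  induction β using EReal.rec with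
  | bot => rw [tanhHalf_bot]; simp [atanhTwo]
  | top => rw [tanhHalf_top]; simp [atanhTwo]
  | coe x =>
      rw [tanhHalf_coe]
      set u := Real.exp (-x) with hu
      have hu0 : 0 < u := Real.exp_pos _
      set t := (1 - u) / (1 + u) with ht
      have hden : (0:ℝ) < 1 + u := by positivity
      have h1t : (1 - t) * (1 + u) = 2 * u := by rw [ht]; field_simp; ring
      have h2t : (1 + t) * (1 + u) = 2 := by rw [ht]; field_simp; ring
      have htlt : t < 1 := by nlinarith
      have htgt : -1 < t := by nlinarith
      have hq : (1 + t) / (1 - t) = 1 / u := by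
        rw [div_eq_div_iff (by linarith) (by linarith)]
        nlinarith
      have hval : (2 * artanh t : ℝ) = x := by
        rw [artanh, hq, one_div, Real.log_inv, hu, Real.log_exp]; ring
      rw [atanhTwo, if_neg (not_le.mpr htlt), if_neg (not_le.mpr htgt), hval]

lemma key_real (x y : ℝ) :
    entFn ((x : EReal) + (y : EReal)) + entFn (atanhTwo (tanhHalf x * tanhHalf y)) =
      entFn (x : EReal) + entFn (y : EReal) := by
  set u := Real.exp (-x) with hu
  set v := Real.exp (-y) with hv
  have hu0 : 0 < u := Real.exp_pos _
  have hv0 : 0 < v := Real.exp_pos _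
  have hdu : (0:ℝ) < 1 + u := by positivity
  have hdv : (0:ℝ) < 1 + v := by positivity
  have hduv : (0:ℝ) < 1 + u * v := by positivity
  rw [tanhHalf_coe, tanhHalf_coe, ← hu, ← hv]
  set t := (1 - u) / (1 + u) * ((1 - v) / (1 + v)) with ht
  have h1t : 1 - t = 2 * (u + v) / ((1 + u) * (1 + v)) := by
    rw [ht]; field_simp; ring
  have h2t : 1 + t = 2 * (1 + u * v) / ((1 + u) * (1 + v)) := by
    rw [ht]; field_simp; ring
  have h1t0 : (0:ℝ) < 1 - t := by rw [h1t]; positivity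
  have h2t0 : (0:ℝ) < 1 + t := by rw [h2t]; positivity
  have htlt : t < 1 := by linarith
  have htgt : -1 < t := by linarith
  rw [atanhTwo, if_neg (not_le.mpr htlt), if_neg (not_le.mpr htgt)]
  rw [← EReal.coe_add, entFn_coe, entFn_coe, entFn_coe, entFn_coe]
  have hq : (0:ℝ) < (1 + t) / (1 - t) := by positivity
  have hexp : Real.exp (-(2 * artanh t)) = (1 - t) / (1 + t) := by
    rw [artanh]
    have : -(2 * (Real.log ((1 + t) / (1 - t)) / 2)) = -Real.log ((1 + t) / (1 - t)) := by ring
    rw [this, Real.exp_neg, Real.exp_log hq, inv_div]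
  rw [hexp]
  have hxy : Real.exp (-(x + y)) = u * v := by
    rw [hu, hv, ← Real.exp_add]; ring_nf
  rw [hxy]
  have hA : 1 + (1 - t) / (1 + t) = (1 + u) * (1 + v) / (1 + u * v) := by
    rw [h1t, h2t]
    field_simp
    ring
  rw [hA]
  rw [← Real.logb_mul (hduv.ne') (by positivity)]
  rw [show (1 + u * v) * ((1 + u) * (1 + v) / (1 + u * v)) = (1 + u) * (1 + v) by
        field_simp]
  rw [Real.logb_mul (hdu.ne') (hdv.ne')]

lemma key (α β : EReal) (hα : α ≠ ⊥) (hβ : β ≠ ⊥) :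
    entFn (α + β) + entFn (atanhTwo (tanhHalf α * tanhHalf β)) = entFn α + entFn β := by
  induction α using EReal.rec with
  | bot => exact absurd rfl hα
  | top =>
      rw [EReal.top_add_of_ne_bot hβ, tanhHalf_top, one_mul, atanhTwo_tanhHalf, entFn_top]
  | coe x =>
      induction β using EReal.rec with
      | bot => exact absurd rfl hβ
      | top =>
          rw [EReal.add_top_of_ne_bot hα, tanhHalf_top, mul_one, atanhTwo_tanhHalf, entFn_top]
          ring
      | coe y => exact key_real x y


/-! ### Jordan decomposition facts -/

/-- The trivial Jordan decomposition of a finite nonnegative measure. -/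
def trivJD (μ : Measure EReal) [IsFiniteMeasure μ] : JordanDecomposition EReal :=
  ⟨μ, 0, Measure.MutuallySingular.zero_right⟩

lemma jp_jn_toSignedMeasure (μ : Measure EReal) [IsFiniteMeasure μ] :
    jp μ.toSignedMeasure = μ ∧ jn μ.toSignedMeasure = 0 := by
  have hj : (trivJD μ).toSignedMeasure = μ.toSignedMeasure := by
    rw [JordanDecomposition.toSignedMeasure]
    show μ.toSignedMeasure - (0 : Measure EReal).toSignedMeasure = μ.toSignedMeasure
    rw [Measure.toSignedMeasure_zero, sub_zero]
  have h2 := JordanDecomposition.toJordanDecomposition_toSignedMeasure (trivJD μ)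
  rw [hj] at h2
  constructor
  · show μ.toSignedMeasure.toJordanDecomposition.posPart = μ
    rw [h2]; rfl
  · show μ.toSignedMeasure.toJordanDecomposition.negPart = 0
    rw [h2]; rfl

lemma H_toSignedMeasure (μ : Measure EReal) [IsFiniteMeasure μ] :
    H μ.toSignedMeasure = ∫ α, entFn α ∂μ := by
  obtain ⟨hp, hn⟩ := jp_jn_toSignedMeasure μ
  rw [H, sInt, hp, hn]
  simp


/-! ### Symmetry consequences -/

lemma wt_top : wt ⊤ = 0 := by simp [wt]
lemma wt_bot : wt ⊥ = ⊤ := by simp [wt]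
lemma wt_coe (x : ℝ) : wt (x : EReal) = ENNReal.ofReal (Real.exp (-x / 2)) := by
  simp [wt]

lemma wt_le_one {α : EReal} (hα : 0 ≤ α) : wt α ≤ 1 := by
  induction α using EReal.rec with
  | bot => exact absurd hα (by simp)
  | top => rw [wt_top]; exact zero_le_one
  | coe x =>
      rw [wt_coe]
      refine ENNReal.ofReal_le_one.mpr (Real.exp_le_one_iff.mpr ?_)
      have hx : (0:ℝ) ≤ x := by exact_mod_cast hα
      linarith

lemma symm_bot (μ : Measure EReal) (h : IsSymmMeasure μ) : μ {⊥} = 0 := by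
  have h1 := h {⊤} (measurableSet_singleton _)
  have hpre : (fun a : EReal => -a) ⁻¹' {⊤} = {⊥} := by
    ext a
    simp [EReal.neg_eq_top_iff]
  rw [hpre, lintegral_singleton, lintegral_singleton, wt_top, wt_bot, zero_mul] at h1
  by_contra hne
  rw [ENNReal.top_mul hne] at h1
  exact ENNReal.top_ne_zero h1

lemma symm_lintegral_wt (μ : Measure EReal) [IsProbabilityMeasure μ]
    (h : IsSymmMeasure μ) : ∫⁻ α, wt α ∂μ ≠ ⊤ := by
  have hsplit := lintegral_add_compl wt (measurableSet_Ici (a := (0:EReal))) (μ := μ)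
  have hIci : ∫⁻ α in Set.Ici (0:EReal), wt α ∂μ ≤ 1 := by
    calc ∫⁻ α in Set.Ici (0:EReal), wt α ∂μ ≤ ∫⁻ _ in Set.Ici (0:EReal), 1 ∂μ :=
          setLIntegral_mono measurable_const fun α hα => wt_le_one hα
      _ = μ (Set.Ici (0:EReal)) := setLIntegral_one _
      _ ≤ 1 := prob_le_one
  have hpre : (fun a : EReal => -a) ⁻¹' (Set.Ioi 0) = Set.Iio (0:EReal) := by
    ext a
    simp only [Set.mem_preimage, Set.mem_Ioi, Set.mem_Iio]
    have h0 : (-0 : EReal) = 0 := neg_zero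
    constructor
    · intro h'
      exact EReal.neg_lt_neg_iff.mp (by rw [h0]; exact h')
    · intro h'
      have h2 : -(0:EReal) < -a := EReal.neg_lt_neg_iff.mpr h'
      rw [h0] at h2
      exact h2
  have hIio : ∫⁻ α in Set.Iio (0:EReal), wt α ∂μ ≤ 1 := by
    rw [← hpre, h (Set.Ioi 0) measurableSet_Ioi]
    calc ∫⁻ α in Set.Ioi (0:EReal), wt α ∂μ ≤ ∫⁻ _ in Set.Ioi (0:EReal), 1 ∂μ :=
          setLIntegral_mono measurable_const fun α hα => wt_le_one (le_of_lt hα)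
      _ = μ (Set.Ioi (0:EReal)) := setLIntegral_one _
      _ ≤ 1 := prob_le_one
  rw [Set.compl_Ici] at hsplit
  refine ne_top_of_le_ne_top (by norm_num : (2:ENNReal) ≠ ⊤) ?_
  rw [← hsplit]
  calc ∫⁻ α in Set.Ici (0:EReal), wt α ∂μ + ∫⁻ α in Set.Iio (0:EReal), wt α ∂μ
      ≤ 1 + 1 := add_le_add hIci hIio
    _ = 2 := one_add_one_eq_two

/-! ### Integrability -/

lemma entFn_le {α : EReal} (hα : α ≠ ⊥) : entFn α ≤ 1 + 3 * (wt α).toReal := by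
  induction α using EReal.rec with
  | bot => exact absurd rfl hα
  | top =>
      rw [entFn_top, wt_top]
      norm_num
  | coe x =>
      rw [entFn_coe, wt_coe, ENNReal.toReal_ofReal (Real.exp_nonneg _)]
      have he : (0:ℝ) < Real.exp (-x) := Real.exp_pos _
      rcases le_or_gt 0 x with hx | hx
      · have hb : 1 + Real.exp (-x) ≤ 2 := by
          have : Real.exp (-x) ≤ 1 := Real.exp_le_one_iff.mpr (by linarith)
          linarith
        have h1 : Real.logb 2 (1 + Real.exp (-x)) ≤ Real.logb 2 2 :=
          Real.logb_le_logb_of_le (by norm_num) (by linarith) hb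
        have h2 : Real.logb 2 2 = 1 := Real.logb_self_eq_one (by norm_num : (1:ℝ) < 2)
        have h3 : (0:ℝ) ≤ 3 * Real.exp (-x / 2) := by positivity
        linarith
      · have hb : 1 + Real.exp (-x) ≤ 2 * Real.exp (-x) := by
          have : (1:ℝ) ≤ Real.exp (-x) := Real.one_le_exp (by linarith)
          linarith
        have h1 : Real.logb 2 (1 + Real.exp (-x)) ≤ Real.logb 2 (2 * Real.exp (-x)) :=
          Real.logb_le_logb_of_le (by norm_num) (by linarith) hb
        have h2 : Real.logb 2 (2 * Real.exp (-x)) = 1 + (-x) / Real.log 2 := by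
          rw [Real.logb_mul (by norm_num) he.ne',
            Real.logb_self_eq_one (by norm_num : (1:ℝ) < 2), Real.logb, Real.log_exp]
        have hlog2 : (0.6931471803 : ℝ) < Real.log 2 := Real.log_two_gt_d9
        have h3 : -x ≤ 2 * Real.exp (-x / 2) := by
          have h4 := Real.add_one_le_exp (-x / 2)
          nlinarith [Real.exp_pos (-x / 2)]
        have h5 : (-x) / Real.log 2 ≤ 3 * Real.exp (-x / 2) := by
          rw [div_le_iff₀ (by linarith)]
          nlinarith [Real.exp_pos (-x / 2)]
        linarith

lemma integrable_entFn (μ : Measure EReal) [IsFiniteMeasure μ]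
    (hbot : μ {⊥} = 0) (hwt : ∫⁻ α, wt α ∂μ ≠ ⊤) : Integrable entFn μ := by
  have hg : Integrable (fun α => 1 + 3 * (wt α).toReal) μ :=
    (integrable_const 1).add
      ((integrable_toReal_of_lintegral_ne_top measurable_wt.aemeasurable hwt).const_mul 3)
  refine hg.mono' measurable_entFn.aestronglyMeasurable ?_
  have hbotae : ∀ᵐ α ∂μ, α ≠ ⊥ := by
    rw [ae_iff]
    convert hbot using 2
    ext a
    simp
  filter_upwards [hbotae] with α hα
  rw [Real.norm_of_nonneg (entFn_nonneg α)]
  exact entFn_le hα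


/-! ### Convolution lemmas -/

lemma mConv_zero_left (ν : Measure EReal) : mConv 0 ν = 0 := by
  rw [mConv, Measure.zero_prod, Measure.map_zero]

lemma mConv_zero_right (μ : Measure EReal) : mConv μ 0 = 0 := by
  rw [mConv, Measure.prod_zero, Measure.map_zero]

lemma mCheck_zero_left (ν : Measure EReal) : mCheck 0 ν = 0 := by
  rw [mCheck, Measure.zero_prod, Measure.map_zero]

lemma mCheck_zero_right (μ : Measure EReal) : mCheck μ 0 = 0 := by
  rw [mCheck, Measure.prod_zero, Measure.map_zero]

lemma wt_add {a b : EReal} (ha : a ≠ ⊥) (hb : b ≠ ⊥) : wt (a + b) = wt a * wt b := by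
  induction a using EReal.rec with
  | bot => exact absurd rfl ha
  | top =>
      rw [EReal.top_add_of_ne_bot hb, wt_top, zero_mul]
  | coe x =>
      induction b using EReal.rec with
      | bot => exact absurd rfl hb
      | top => rw [EReal.add_top_of_ne_bot (EReal.coe_ne_bot x), wt_top, mul_zero]
      | coe y =>
          rw [← EReal.coe_add, wt_coe, wt_coe, wt_coe,
            ← ENNReal.ofReal_mul (Real.exp_nonneg _), ← Real.exp_add]
          congr 2
          ring


/-- Duality rule for entropy: for all symmetric probability measures
`x1, x2 ∈ X`, `H(x1 ⊛ x2) + H(x1 ⊠ x2) = H(x1) + H(x2)`. -/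
theorem entropy_duality (x1 x2 : SM) (h1 : MemX x1) (h2 : MemX x2) :
    H (sConv x1 x2) + H (sCheck x1 x2) = H x1 + H x2 := by
  obtain ⟨⟨μ1, hμ1, hx1⟩, hsym1⟩ := h1
  obtain ⟨⟨μ2, hμ2, hx2⟩, hsym2⟩ := h2
  haveI := hμ1; haveI := hμ2
  have hx1' : x1 = μ1.toSignedMeasure := hx1
  have hx2' : x2 = μ2.toSignedMeasure := hx2
  subst hx1'; subst hx2'
  obtain ⟨hp1, hn1⟩ := jp_jn_toSignedMeasure μ1
  obtain ⟨hp2, hn2⟩ := jp_jn_toSignedMeasure μ2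
  have hs1 : IsSymmMeasure μ1 := hp1 ▸ hsym1.1
  have hs2 : IsSymmMeasure μ2 := hp2 ▸ hsym2.1
  have hb1 : μ1 {⊥} = 0 := symm_bot μ1 hs1
  have hb2 : μ2 {⊥} = 0 := symm_bot μ2 hs2
  have hw1 : ∫⁻ α, wt α ∂μ1 ≠ ⊤ := symm_lintegral_wt μ1 hs1
  have hw2 : ∫⁻ α, wt α ∂μ2 ≠ ⊤ := symm_lintegral_wt μ2 hs2
  have hconv : sConv μ1.toSignedMeasure μ2.toSignedMeasure = (mConv μ1 μ2).toSignedMeasure := by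
    unfold sConv
    simp only [hp1, hp2, hn1, hn2, mConv_zero_right, mConv_zero_left,
      Measure.toSignedMeasure_zero, sub_zero, add_zero]
  have hcheck : sCheck μ1.toSignedMeasure μ2.toSignedMeasure
      = (mCheck μ1 μ2).toSignedMeasure := by
    unfold sCheck
    simp only [hp1, hp2, hn1, hn2, mCheck_zero_right, mCheck_zero_left,
      Measure.toSignedMeasure_zero, sub_zero, add_zero]
  set P := μ1.prod μ2 with hP
  have hHs : H (sConv μ1.toSignedMeasure μ2.toSignedMeasure)
      = ∫ p, entFn (p.1 + p.2) ∂P := by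
    rw [hconv, H_toSignedMeasure, mConv,
      integral_map measurable_addE.aemeasurable measurable_entFn.aestronglyMeasurable]
  have hHc : H (sCheck μ1.toSignedMeasure μ2.toSignedMeasure)
      = ∫ p, entFn (atanhTwo (tanhHalf p.1 * tanhHalf p.2)) ∂P := by
    rw [hcheck, H_toSignedMeasure, mCheck,
      integral_map measurable_checkFn.aemeasurable measurable_entFn.aestronglyMeasurable]
  have hae : ∀ᵐ p ∂P, p.1 ≠ ⊥ ∧ p.2 ≠ ⊥ := by
    have e1 : P (({⊥} : Set EReal) ×ˢ (Set.univ : Set EReal)) = 0 := by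
      rw [Measure.prod_prod, hb1, zero_mul]
    have e2 : P ((Set.univ : Set EReal) ×ˢ ({⊥} : Set EReal)) = 0 := by
      rw [Measure.prod_prod, hb2, mul_zero]
    rw [ae_iff]
    refine measure_mono_null ?_ (measure_union_null e1 e2)
    intro p hp
    simp only [Set.mem_setOf_eq, not_and_or, not_not] at hp
    rcases hp with hp | hp
    · exact Or.inl ⟨hp, Set.mem_univ _⟩
    · exact Or.inr ⟨Set.mem_univ _, hp⟩
  have ient1 : Integrable entFn μ1 := integrable_entFn μ1 hb1 hw1
  have ient2 : Integrable entFn μ2 := integrable_entFn μ2 hb2 hw2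
  have hmap1 : P.map Prod.fst = μ1 := by rw [Measure.map_fst_prod]; simp
  have hmap2 : P.map Prod.snd = μ2 := by rw [Measure.map_snd_prod]; simp
  have g1 : Integrable (fun p : EReal × EReal => entFn p.1) P := by
    have h := ient1
    rw [← hmap1] at h
    exact h.comp_aemeasurable measurable_fst.aemeasurable
  have g2 : Integrable (fun p : EReal × EReal => entFn p.2) P := by
    have h := ient2
    rw [← hmap2] at h
    exact h.comp_aemeasurable measurable_snd.aemeasurable
  have gsum : Integrable (fun p : EReal × EReal => entFn p.1 + entFn p.2) P := g1.add g2
  have hGm : AEMeasurable (fun p : EReal × EReal => wt p.1 * wt p.2) P :=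
    ((measurable_wt.comp measurable_fst).mul (measurable_wt.comp measurable_snd)).aemeasurable
  have hGint : ∫⁻ p, wt p.1 * wt p.2 ∂P ≠ ⊤ := by
    rw [lintegral_prod_mul measurable_wt.aemeasurable measurable_wt.aemeasurable]
    exact ENNReal.mul_ne_top hw1 hw2
  have hG : Integrable (fun p : EReal × EReal => 1 + 3 * (wt p.1 * wt p.2).toReal) P :=
    (integrable_const 1).add
      ((integrable_toReal_of_lintegral_ne_top hGm hGint).const_mul 3)
  have if1 : Integrable (fun p : EReal × EReal => entFn (p.1 + p.2)) P := by
    refine hG.mono' (measurable_entFn.comp measurable_addE).aestronglyMeasurable ?_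
    filter_upwards [hae] with p hp
    rw [Real.norm_of_nonneg (entFn_nonneg _)]
    have hadd : p.1 + p.2 ≠ ⊥ := by
      rw [Ne, EReal.add_eq_bot_iff]
      push_neg
      exact hp
    calc entFn (p.1 + p.2) ≤ 1 + 3 * (wt (p.1 + p.2)).toReal := entFn_le hadd
      _ = 1 + 3 * (wt p.1 * wt p.2).toReal := by rw [wt_add hp.1 hp.2]
  have if2 : Integrable
      (fun p : EReal × EReal => entFn (atanhTwo (tanhHalf p.1 * tanhHalf p.2))) P := by
    refine gsum.mono' (measurable_entFn.comp measurable_checkFn).aestronglyMeasurable ?_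
    filter_upwards [hae] with p hp
    rw [Real.norm_of_nonneg (entFn_nonneg _)]
    have hk := key p.1 p.2 hp.1 hp.2
    have hnn := entFn_nonneg (p.1 + p.2)
    linarith
  have hfe : (fun p : EReal × EReal =>
        entFn (p.1 + p.2) + entFn (atanhTwo (tanhHalf p.1 * tanhHalf p.2)))
      =ᵐ[P] fun p => entFn p.1 + entFn p.2 := by
    filter_upwards [hae] with p hp using key p.1 p.2 hp.1 hp.2
  rw [hHs, hHc, ← integral_add if1 if2, integral_congr_ae hfe, integral_add g1 g2]
  have m1' : (∫ p : EReal × EReal, entFn p.1 ∂P) = ∫ α, entFn α ∂μ1 := by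
    rw [← hmap1, integral_map measurable_fst.aemeasurable
      (by rw [hmap1]; exact measurable_entFn.aestronglyMeasurable)]
  have m2' : (∫ p : EReal × EReal, entFn p.2 ∂P) = ∫ α, entFn α ∂μ2 := by
    rw [← hmap2, integral_map measurable_snd.aemeasurable
      (by rw [hmap2]; exact measurable_entFn.aestronglyMeasurable)]
  rw [m1', m2', H_toSignedMeasure, H_toSignedMeasure]


end SCLDPC
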